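/- Let H be symmetric with μ·I ⪯ H (μ > 0), and let H^S = I_S^⊤ (I_S H^{-1} I_S^⊤)^{-1} I_S for a set S ⊆ [d]. Then for any vector x ∈ ℝ^d, ‖H^{-1} H^S x‖₂² ≤ (1/μ) · x^⊤ H^S x. -/

import Mathlib

open Matrix Finset

/-- The selection matrix `I_S ∈ ℝ^{|S|×d}` whose rows are the standard basis vectors
`eᵢᵀ` for `i ∈ S`. -/
def selMat {d : ℕ} (S : Finset (Fin d)) : Matrix {i // i ∈ S} (Fin d) ℝ :=
  Matrix.of fun i j => if (i : Fin d) = j then (1 : ℝ) else 0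

/-- The matrix `H^S = I_Sᵀ (I_S H⁻¹ I_Sᵀ)⁻¹ I_S`. -/
noncomputable def HmatS {d : ℕ} (H : Matrix (Fin d) (Fin d) ℝ) (S : Finset (Fin d)) :
    Matrix (Fin d) (Fin d) ℝ :=
  (selMat S)ᵀ * (selMat S * H⁻¹ * (selMat S)ᵀ)⁻¹ * selMat S

/-- The diagonal projection matrix `E_S` onto the coordinates in `S`. -/
def projMat {d : ℕ} (S : Finset (Fin d)) : Matrix (Fin d) (Fin d) ℝ :=
  Matrix.diagonal fun i => if i ∈ S then (1 : ℝ) else 0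
/-- For symmetric `H` with `μ·I ⪯ H` (`μ > 0`) and `H^S = I_Sᵀ(I_S H⁻¹ I_Sᵀ)⁻¹ I_S`,
for any vector `x`: `‖H⁻¹ H^S x‖₂² ≤ (1/μ) xᵀ H^S x`. -/
theorem norm_sq_le_quadform {d : ℕ} (H : Matrix (Fin d) (Fin d) ℝ) (hH : H.PosDef)
    (μ : ℝ) (hμ : 0 < μ)
    (hμH : ∀ x : Fin d → ℝ, μ * ∑ i, x i ^ 2 ≤ x ⬝ᵥ H.mulVec x)
    (S : Finset (Fin d)) (x : Fin d → ℝ) :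
    ∑ i, ((H⁻¹ * HmatS H S).mulVec x i) ^ 2 ≤ (1 / μ) * (x ⬝ᵥ (HmatS H S).mulVec x) := by
  classical
  set A := selMat S with hAdef
  set K := H⁻¹ with hKdef
  have hK : K.PosDef := hH.inv
  have hKh : Kᵀ = K := by simpa using hK.isHermitian.eq
  set M := A * K * Aᵀ with hMdef
  have hM : M.PosDef := by
    refine Matrix.PosDef.of_dotProduct_mulVec_pos (by simp [hMdef, Matrix.IsHermitian, Matrix.conjTranspose_mul, Matrix.mul_assoc,
      show Kᴴ = K from hK.isHermitian.eq, hKh]) fun v hv => ?_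
    have hw : Aᵀ *ᵥ v ≠ 0 := by
      intro h
      apply hv
      funext i
      have := congrFun h (i : Fin d)
      simpa [A, selMat, Matrix.mulVec, dotProduct, Matrix.transpose_apply,
        Subtype.coe_inj, Finset.sum_ite_eq'] using this
    have := hK.dotProduct_mulVec_pos hw
    convert this using 2
    rw [hMdef]
    simp [Matrix.dotProduct_mulVec, Matrix.mulVec_transpose, ← Matrix.vecMul_vecMul,
      star_trivial, Matrix.mul_assoc]
    rw [Matrix.vecMul_transpose, dotProduct_comm, Matrix.dotProduct_mulVec,
      dotProduct_comm]
  have hMM : M⁻¹ * M = 1 := Matrix.nonsing_inv_mul M (isUnit_iff_ne_zero.mpr hM.det_pos.ne')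
  have hKH : K * H = 1 := Matrix.nonsing_inv_mul H (isUnit_iff_ne_zero.mpr hH.det_pos.ne')
  set G := HmatS H S with hGdef
  have hGeq : G = Aᵀ * M⁻¹ * A := rfl
  have hGsym : Gᵀ = G := by
    rw [hGeq, Matrix.transpose_mul, Matrix.transpose_mul, Matrix.transpose_transpose,
      Matrix.transpose_nonsing_inv, show Mᵀ = M from by
        simp [hMdef, Matrix.transpose_mul, hKh, Matrix.mul_assoc], Matrix.mul_assoc]
  have hGKG : G * (K * G) = G := by
    rw [hGeq]
    have h1 : A * (K * (Aᵀ * (M⁻¹ * A))) = M * (M⁻¹ * A) := by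
      simp only [hMdef, Matrix.mul_assoc]
    calc Aᵀ * M⁻¹ * A * (K * (Aᵀ * M⁻¹ * A))
        = Aᵀ * (M⁻¹ * (A * (K * (Aᵀ * (M⁻¹ * A))))) := by simp only [Matrix.mul_assoc]
      _ = Aᵀ * (M⁻¹ * (M * (M⁻¹ * A))) := by rw [h1]
      _ = Aᵀ * M⁻¹ * A := by
          rw [← Matrix.mul_assoc M⁻¹ M, hMM, Matrix.one_mul, Matrix.mul_assoc]
  have hkey : (K * G)ᵀ * (H * (K * G)) = G := by
    rw [Matrix.transpose_mul, hGsym, hKh]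
    calc G * K * (H * (K * G)) = G * ((K * H) * (K * G)) := by simp only [Matrix.mul_assoc]
      _ = G := by rw [hKH, Matrix.one_mul, hGKG]
  set y := (K * G) *ᵥ x with hydef
  have hyH : y ⬝ᵥ H *ᵥ y = x ⬝ᵥ G *ᵥ x := by
    rw [hydef, Matrix.mulVec_mulVec, ← Matrix.vecMul_transpose,
      ← Matrix.dotProduct_mulVec, Matrix.mulVec_mulVec, hkey]
  have := hμH y
  calc ∑ i, y i ^ 2 = (1/μ) * (μ * ∑ i, y i ^ 2) := by field_simp
    _ ≤ (1/μ) * (y ⬝ᵥ H *ᵥ y) := by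
        apply mul_le_mul_of_nonneg_left this (by positivity)
    _ = (1/μ) * (x ⬝ᵥ G *ᵥ x) := by rw [hyH]
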